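/- arXiv:2006.13843 — 5 statements merged into one kernel-verified Lean document; each statement's English description precedes it below -/
import Mathlib

section
/- Let (T, χ) be a tree decomposition of a graph, S a subtree of T, and let v, v' be two boundary vertices of S that occur together in the bag χ(t) of some tree node t outside S. Then v and v' also occur together in some bag χ(s) for a node s of S. -/
structure TreeDecomp (V : Type) (I : Type) (G : SimpleGraph V) where
  T : SimpleGraph I
  isTree : T.IsTree
  bag : I → Set V
  cover : ∀ ⦃u v : V⦄, G.Adj u v → ∃ t : I, u ∈ bag t ∧ v ∈ bag t
  conn : ∀ v : V, (T.induce {t : I | v ∈ bag t}).Connected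

open SimpleGraph

/-- In a connected induced subgraph, any two members are joined by a path staying in the set. -/
lemma path_in_set {J : Type} [DecidableEq J] (T : SimpleGraph J) (A : Set J)
    (h : (T.induce A).Connected) {a b : J} (ha : a ∈ A) (hb : b ∈ A) :
    ∃ p : T.Walk a b, p.IsPath ∧ ∀ x ∈ p.support, x ∈ A := by
  obtain ⟨w⟩ := h ⟨a, ha⟩ ⟨b, hb⟩
  refine ⟨(w.map (SimpleGraph.Embedding.induce A).toHom).bypass,
    SimpleGraph.Walk.bypass_isPath _, fun x hx => ?_⟩
  have hx' := SimpleGraph.Walk.support_bypass_subset _ hx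
  erw [SimpleGraph.Walk.support_map, List.mem_map] at hx'
  obtain ⟨⟨y, hy⟩, _, rfl⟩ := hx'
  exact hy

/-- First vertex of a path whose endpoint lies in `A` that itself lies in `A`. -/
lemma first_in_set {J : Type} {T : SimpleGraph J} (A : Set J) :
    ∀ {a b : J} (w : T.Walk a b), w.IsPath → b ∈ A →
      ∃ m ∈ A, ∃ w1 : T.Walk a m, w1.IsPath ∧ w1.support ⊆ w.support ∧
        ∀ x ∈ w1.support, x ∈ A → x = m := by
  intro a b w
  induction w with
  | nil =>
    intro _ hb
    exact ⟨_, hb, SimpleGraph.Walk.nil, by simp, by simp, by simp⟩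
  | @cons u x b h p ih =>
    intro hw hb
    by_cases hu : u ∈ A
    · exact ⟨u, hu, SimpleGraph.Walk.nil, by simp, by simp,
        by simp (config := { contextual := true })⟩
    · obtain ⟨m, hm, w1, hw1, hsub, hlast⟩ := ih hw.of_cons hb
      refine ⟨m, hm, SimpleGraph.Walk.cons h w1, ?_, ?_, ?_⟩
      · rw [SimpleGraph.Walk.cons_isPath_iff]
        refine ⟨hw1, fun huw1 => ?_⟩
        rw [SimpleGraph.Walk.cons_isPath_iff] at hw
        exact hw.2 (hsub huw1)
      · rw [SimpleGraph.Walk.support_cons, SimpleGraph.Walk.support_cons]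
        exact List.cons_subset_cons _ hsub
      · intro y hy hyA
        rw [SimpleGraph.Walk.support_cons, List.mem_cons] at hy
        rcases hy with rfl | hy
        · exact absurd hyA hu
        · exact hlast y hy hyA

/-- If two boundary vertices `v, v'` of the subtree `S` occur together in the
bag of a tree node `t` outside `S`, then they also occur together in some bag
of a node of `S`. -/
theorem stmt_1 {V I : Type} [Fintype V] [Fintype I] (G : SimpleGraph V)
    (td : TreeDecomp V I G) (S : Set I) (hS : (td.T.induce S).Connected)
    (v v' : V)
    (hv : v ∈ ⋃ t ∈ S, td.bag t) (hv' : v' ∈ ⋃ t ∈ S, td.bag t)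
    (t : I) (ht : t ∉ S) (hvt : v ∈ td.bag t) (hv't : v' ∈ td.bag t) :
    ∃ s ∈ S, v ∈ td.bag s ∧ v' ∈ td.bag s := by
  classical
  simp only [Set.mem_iUnion] at hv hv'
  obtain ⟨s, hsS, hvs⟩ := hv
  obtain ⟨s', hs'S, hv's'⟩ := hv'
  -- path P : t → s with all bags containing v
  obtain ⟨P, hP, hPv⟩ := path_in_set td.T {i : I | v ∈ td.bag i} (td.conn v) hvt hvs
  -- path Q : t → s' with all bags containing v'
  obtain ⟨Q, hQ, hQv⟩ := path_in_set td.T {i : I | v' ∈ td.bag i} (td.conn v') hv't hv's'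
  -- path U : s → s' inside S
  obtain ⟨U, hU, hUS⟩ := path_in_set td.T S hS hsS hs'S
  -- take the last vertex m of P that lies on Q (working along P.reverse)
  have htQ : t ∈ Q.support := Q.start_mem_support
  obtain ⟨m, hmQ, W1, hW1, hW1sub, hW1last⟩ :=
    first_in_set {i : I | i ∈ Q.support} P.reverse hP.reverse htQ
  -- m is on P, hence v ∈ bag m;  m is on Q, hence v' ∈ bag m
  have hmP : m ∈ P.support := by
    have := hW1sub W1.end_mem_support
    rwa [SimpleGraph.Walk.support_reverse, List.mem_reverse] at this
  -- build path s → s' through m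
  set D := Q.dropUntil m hmQ with hD
  have hDpath : D.IsPath := hQ.dropUntil hmQ
  have hDsub : D.support ⊆ Q.support := SimpleGraph.Walk.support_dropUntil_subset Q hmQ
  have hC : (W1.append D).IsPath := by
    rw [SimpleGraph.Walk.isPath_def, SimpleGraph.Walk.support_append]
    refine List.Nodup.append (hW1.support_nodup) (hDpath.support_nodup.tail) ?_
    intro x hxW1 hxD
    have hxQ : x ∈ Q.support := hDsub (List.mem_of_mem_tail hxD)
    have hxm : x = m := hW1last x hxW1 hxQ
    have hnd := hDpath.support_nodup
    rw [SimpleGraph.Walk.support_eq_cons D] at hnd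
    exact (List.nodup_cons.mp hnd).1 (hxm ▸ hxD)
  -- by uniqueness of paths in a tree, this path equals U, so m ∈ S
  have huniq := td.isTree.2.path_unique ⟨W1.append D, hC⟩ ⟨U, hU⟩
  have hmU : m ∈ U.support := by
    have : m ∈ (W1.append D).support := by
      rw [SimpleGraph.Walk.mem_support_append_iff]
      exact Or.inl W1.end_mem_support
    have hsupp : (W1.append D).support = U.support := by
      rw [show W1.append D = U from congrArg Subtype.val huniq]
    rwa [hsupp] at this
  exact ⟨m, hUS m hmU, hPv m hmP, hQv m hmQ⟩
end

section
/- Let D be a directed acyclic graph on vertex set V, let V_S ⊆ V, and suppose D' is obtained from D by replacing the in-neighborhoods (parent sets) of vertices in V_S, while vertices outside V_S keep their parent sets. Suppose (i) the induced subdigraph D'[V_S] is acyclic, and (ii) the digraph on V_S whose arc set is the arcs of D'[V_S] together with all virtual arcs (pairs (v', v) with v', v ∈ V_S such that D' has a directed path from v' to v all of whose internal vertices lie outside V_S) is acyclic. Then D' is acyclic. -/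
/-- A digraph (given by its arc relation `E`) is acyclic if no vertex lies on a
directed cycle. -/
def Acyclic {V : Type} (E : V → V → Prop) : Prop :=
  ∀ v : V, ¬ Relation.TransGen E v v

/-- `DirPathOutside E S a b` holds if there is a directed path in `E` from `a`
to `b` (with at least one arc) all of whose internal vertices lie outside `S`. -/
def DirPathOutside {V : Type} (E : V → V → Prop) (S : Set V) (a b : V) : Prop :=
  ∃ l : List V, (∀ x ∈ l, x ∉ S) ∧ List.Chain E a (l ++ [b])

/-- If `D'` agrees with the DAG `D` on parent sets of vertices outside `V_S`,
the induced subdigraph `D'[V_S]` is acyclic, and the digraph on `V_S` consisting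
of the arcs of `D'[V_S]` together with all virtual arcs is acyclic, then `D'` is
acyclic. -/
theorem stmt_4 {V : Type} [Fintype V] (E E' : V → V → Prop) (VS : Set V)
    (hD : Acyclic E)
    (hout : ∀ v ∉ VS, ∀ u, E' u v ↔ E u v)
    (h1 : Acyclic (fun u v => u ∈ VS ∧ v ∈ VS ∧ E' u v))
    (h2 : Acyclic (fun u v =>
      (u ∈ VS ∧ v ∈ VS ∧ E' u v) ∨
      (u ∈ VS ∧ v ∈ VS ∧ DirPathOutside E' VS u v))) :
    Acyclic E' := by
  set R : V → V → Prop := fun u w => u ∈ VS ∧ w ∈ VS ∧ DirPathOutside E' VS u w with hR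
  have hbase : ∀ a b : V, E' a b → DirPathOutside E' VS a b := by
    intro a b h
    exact ⟨[], by simp, List.Chain.cons h List.Chain.nil⟩
  have hcons : ∀ a c b : V, E' a c → c ∉ VS → DirPathOutside E' VS c b →
      DirPathOutside E' VS a b := by
    rintro a c b h hc ⟨l, hl, hch⟩
    refine ⟨c :: l, ?_, List.Chain.cons h hch⟩
    rintro x hx
    rcases List.mem_cons.mp hx with rfl | hx
    · exact hc
    · exact hl x hx
  have lemA : ∀ b : V, b ∈ VS → ∀ a : V, Relation.TransGen E' a b →
      DirPathOutside E' VS a b ∨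
        ∃ c, c ∈ VS ∧ DirPathOutside E' VS a c ∧ Relation.TransGen R c b := by
    intro b hb a hab
    induction hab using Relation.TransGen.head_induction_on with
    | single h => exact Or.inl (hbase _ _ h)
    | head h htg IH =>
      rename_i a c
      by_cases hc : c ∈ VS
      · refine Or.inr ⟨c, hc, hbase _ _ h, ?_⟩
        rcases IH with hp | ⟨d, hd, hpd, htr⟩
        · exact Relation.TransGen.single ⟨hc, hb, hp⟩
        · exact Relation.TransGen.head ⟨hc, hd, hpd⟩ htr
      · rcases IH with hp | ⟨d, hd, hpd, htr⟩
        · exact Or.inl (hcons _ _ _ h hc hp)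
        · exact Or.inr ⟨d, hd, hcons _ _ _ h hc hpd, htr⟩
  have hVS : ∀ c ∈ VS, ¬ Relation.TransGen E' c c := by
    intro c hc htg
    have hmono : ∀ u w, R u w → ((u ∈ VS ∧ w ∈ VS ∧ E' u w) ∨
        (u ∈ VS ∧ w ∈ VS ∧ DirPathOutside E' VS u w)) := fun u w hr => Or.inr hr
    rcases lemA c hc c htg with hp | ⟨d, hd, hpd, htr⟩
    · exact h2 c (Relation.TransGen.single (Or.inr ⟨hc, hc, hp⟩))
    · have : Relation.TransGen R c c := Relation.TransGen.head ⟨hc, hd, hpd⟩ htr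
      exact h2 c (Relation.TransGen.mono hmono c c this)
  have lemB : ∀ b : V, b ∉ VS → ∀ a : V, Relation.TransGen E' a b →
      Relation.TransGen E a b ∨
        ∃ c, c ∈ VS ∧ Relation.TransGen E' a c ∧ Relation.TransGen E' c b := by
    intro b hb a hab
    induction hab using Relation.TransGen.head_induction_on with
    | single h =>
      rename_i a'
      exact Or.inl (Relation.TransGen.single ((hout b hb a').mp h))
    | head h htg IH =>
      rename_i a c
      by_cases hc : c ∈ VS
      · exact Or.inr ⟨c, hc, Relation.TransGen.single h, htg⟩
      · have hE : E a c := (hout c hc a).mp h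
        rcases IH with hp | ⟨d, hd, hpd, htr⟩
        · exact Or.inl (Relation.TransGen.head hE hp)
        · exact Or.inr ⟨d, hd, Relation.TransGen.head h hpd, htr⟩
  intro v hv
  by_cases hvS : v ∈ VS
  · exact hVS v hvS hv
  · rcases lemB v hvS v hv with hp | ⟨c, hc, h1', h2'⟩
    · exact hD v hp
    · exact hVS c hc (h2'.trans h1')
end

section
/- Let G be a graph with tree decomposition (T, χ), S a subtree of T with vertex set V_S = ⋃_{t ∈ V(S)} χ(t), and let G' be a graph on V_S such that there is a tree decomposition (S', χ') of width ≤ W of the graph obtained from G' by adding all virtual edges (pairs of vertices in V_S occurring together in some bag outside S). Suppose the width of (T, χ) is ≤ W. Then the graph H on V obtained from G by replacing all edges within V_S by the edges of G' (keeping all edges of G with at least one endpoint outside V_S that are covered by bags outside S) has treewidth at most W. -/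
/-- A tree decomposition of a graph `G` whose relevant vertex set is `U ⊆ V`:
`T` is a tree, bags are subsets of `U`, every edge of `G` is contained in some
bag, and for every vertex of `U` the tree nodes whose bag contains it induce a
nonempty connected subtree of `T`. -/
structure TreeDecompOn (V : Type) (I : Type) (U : Set V) (G : SimpleGraph V) where
  T : SimpleGraph I
  isTree : T.IsTree
  bag : I → Set V
  bag_sub : ∀ t : I, bag t ⊆ U
  cover : ∀ ⦃u v : V⦄, G.Adj u v → ∃ t : I, u ∈ bag t ∧ v ∈ bag t
  conn : ∀ v ∈ U, (T.induce {t : I | v ∈ bag t}).Connected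

namespace Stmt6
open SimpleGraph Sum



variable {α β : Type}

lemma exists_walk_of_induce_reachable {G : SimpleGraph α} {A : Set α} {a b : A}
    (h : (G.induce A).Reachable a b) :
    ∃ w : G.Walk a.1 b.1, ∀ x ∈ w.support, x ∈ A := by
  obtain ⟨w⟩ := h
  refine ⟨w.map (SimpleGraph.Embedding.induce A).toHom, ?_⟩
  intro x hx
  replace hx : x ∈ (w.map (SimpleGraph.Embedding.induce A).toHom).support := hx
  rw [SimpleGraph.Walk.support_map, List.mem_map] at hx
  obtain ⟨y, _, rfl⟩ := hx
  exact y.2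

lemma exists_walk_in {G : SimpleGraph α} {A : Set α} (h : (G.induce A).Connected)
    {a b : α} (ha : a ∈ A) (hb : b ∈ A) :
    ∃ w : G.Walk a b, ∀ x ∈ w.support, x ∈ A :=
  exists_walk_of_induce_reachable (h.preconnected ⟨a, ha⟩ ⟨b, hb⟩)

lemma induce_reachable_of_walk {G : SimpleGraph α} {A : Set α} {a b : α}
    (w : G.Walk a b) (hw : ∀ x ∈ w.support, x ∈ A) (ha : a ∈ A) (hb : b ∈ A) :
    (G.induce A).Reachable ⟨a, ha⟩ ⟨b, hb⟩ := by
  induction w with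
  | nil => rfl
  | @cons u c d h p ih =>
      have hc : c ∈ A := hw c (by simp)
      have hadj : (G.induce A).Adj ⟨u, ha⟩ ⟨c, hc⟩ := h
      exact (hadj.reachable).trans (ih (fun x hx => hw x (by simp [hx])) hc hb)

/-- Gate lemma: if `A` induces a connected subgraph of an acyclic graph and there is a
path from `x` to some element of `A`, then some `y ∈ A` lies on every path from `x`
to any element of `A`. -/
lemma gate [DecidableEq α] {G : SimpleGraph α} (hG : G.IsAcyclic) {A : Set α}
    (hA : (G.induce A).Connected) {x a₀ : α} (p : G.Walk x a₀) :
    p.IsPath → a₀ ∈ A →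
      ∃ y ∈ A, ∀ ⦃a : α⦄, a ∈ A → ∀ (q : G.Walk x a), q.IsPath → y ∈ q.support := by
  induction p with
  | nil =>
      intro _ ha₀
      exact ⟨_, ha₀, fun a ha q hq => q.start_mem_support⟩
  | @cons x w a₀ h p ih =>
      intro hp ha₀
      by_cases hx : x ∈ A
      · exact ⟨x, hx, fun a ha q hq => q.start_mem_support⟩
      · obtain ⟨y, hy, hgate⟩ := ih hp.of_cons ha₀
        refine ⟨y, hy, ?_⟩
        intro a ha q hq
        -- walk from a₀ to a inside A
        obtain ⟨m, hm⟩ := exists_walk_in hA ha₀ ha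
        -- the path from w to a
        set B := (p.append m).bypass with hB
        have hBpath : B.IsPath := (p.append m).bypass_isPath
        have hyB : y ∈ B.support := hgate ha B hBpath
        have hxB : x ∉ B.support := by
          intro hxB
          have := (p.append m).support_bypass_subset hxB
          rw [SimpleGraph.Walk.mem_support_append_iff] at this
          rcases this with h1 | h2
          · exact ((SimpleGraph.Walk.cons_isPath_iff _ _).mp hp).2 h1
          · exact hx (hm x h2)
        have hconsB : (SimpleGraph.Walk.cons h B).IsPath := hBpath.cons hxB
        have heq : q = SimpleGraph.Walk.cons h B :=
          congrArg Subtype.val (hG.path_unique ⟨q, hq⟩ ⟨SimpleGraph.Walk.cons h B, hconsB⟩)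
        rw [heq, SimpleGraph.Walk.support_cons]
        exact List.mem_cons_of_mem _ hyB

/-- A set of vertices pairwise contained in common bags is wholly contained in a bag,
for bags forming connected subtrees of a tree. -/
lemma common_bag {G : SimpleGraph α} (hG : G.IsTree) (bag : α → Set β)
    (F : Finset β)
    (hconn : ∀ v ∈ F, (G.induce {j | v ∈ bag j}).Connected)
    (hpair : ∀ u ∈ F, ∀ v ∈ F, ∃ j, u ∈ bag j ∧ v ∈ bag j) :
    ∃ j, ∀ v ∈ F, v ∈ bag j := by
  classical
  induction F using Finset.induction with
  | empty =>
      obtain ⟨j⟩ := hG.isConnected.nonempty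
      exact ⟨j, by simp⟩
  | @insert u F hu ih =>
      obtain ⟨x, hx⟩ := ih (fun v hv => hconn v (Finset.mem_insert_of_mem hv))
        (fun a ha b hb => hpair a (Finset.mem_insert_of_mem ha) b (Finset.mem_insert_of_mem hb))
      have hAconn : (G.induce {j | u ∈ bag j}).Connected :=
        hconn u (Finset.mem_insert_self u F)
      obtain ⟨j₀, hj₀, -⟩ := hpair u (Finset.mem_insert_self u F) u (Finset.mem_insert_self u F)
      -- a path from x to j₀ ∈ A
      obtain ⟨w⟩ := hG.isConnected x j₀
      classical
      obtain ⟨y, hy, hgate⟩ := gate hG.IsAcyclic hAconn w.bypass w.bypass_isPath hj₀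
      refine ⟨y, ?_⟩
      intro v hv
      rcases Finset.mem_insert.mp hv with rfl | hv
      · exact hy
      · -- T_v connected, contains x and some j_v ∈ A
        obtain ⟨jv, hjvu, hjvv⟩ := hpair u (Finset.mem_insert_self u F) v
          (Finset.mem_insert_of_mem hv)
        obtain ⟨wv, hwv⟩ := exists_walk_in (hconn v (Finset.mem_insert_of_mem hv))
          (show x ∈ {j | v ∈ bag j} from hx v hv) (show jv ∈ {j | v ∈ bag j} from hjvv)
        have hyv : y ∈ wv.bypass.support := hgate hjvu wv.bypass wv.bypass_isPath
        exact hwv y (wv.support_bypass_subset hyv)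

/-- In a tree, a connected set `S` has a unique "door" edge into each component of the
complement: if `t₁, t₂` are outside `S`, joined by a walk avoiding `S`, and each is
adjacent to a vertex of `S`, then `t₁ = t₂`. -/
lemma unique_door [DecidableEq α] {G : SimpleGraph α} (hG : G.IsTree) {S : Set α}
    (hS : (G.induce S).Connected) {t₁ t₂ s₁ s₂ : α}
    (hs₁ : s₁ ∈ S) (hs₂ : s₂ ∈ S)
    (a₁ : G.Adj t₁ s₁) (a₂ : G.Adj t₂ s₂)
    (w : G.Walk t₁ t₂) (hw : ∀ x ∈ w.support, x ∉ S) : t₁ = t₂ := by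
  by_contra hne
  have ht₁ : t₁ ∉ S := hw _ w.start_mem_support
  have ht₂ : t₂ ∉ S := hw _ w.end_mem_support
  obtain ⟨m, hm⟩ := exists_walk_of_induce_reachable
    (hS.preconnected ⟨s₁, hs₁⟩ ⟨s₂, hs₂⟩)
  -- path P1 : s₁ → t₁ → ... → t₂
  have hwb : ∀ x ∈ w.bypass.support, x ∉ S := fun x hx => hw x (w.support_bypass_subset hx)
  have hP1 : (SimpleGraph.Walk.cons a₁.symm w.bypass).IsPath :=
    w.bypass_isPath.cons (fun h => hwb _ h hs₁)
  -- path P2 : t₂ → s₂ → ... → s₁, reversed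
  have hmb : ∀ x ∈ m.bypass.support, x ∈ S := fun x hx => hm x (m.support_bypass_subset hx)
  have hP2' : (SimpleGraph.Walk.cons a₂ m.bypass.reverse).IsPath :=
    (m.bypass_isPath.reverse).cons (by
      intro h
      rw [SimpleGraph.Walk.support_reverse, List.mem_reverse] at h
      exact ht₂ (hmb _ h))
  have heq : SimpleGraph.Walk.cons a₁.symm w.bypass
      = (SimpleGraph.Walk.cons a₂ m.bypass.reverse).reverse :=
    congrArg Subtype.val (hG.IsAcyclic.path_unique
      ⟨SimpleGraph.Walk.cons a₁.symm w.bypass, hP1⟩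
      ⟨(SimpleGraph.Walk.cons a₂ m.bypass.reverse).reverse, hP2'.reverse⟩)
  -- t₁ is in the support of the LHS but not the RHS
  have hmem : t₁ ∈ (SimpleGraph.Walk.cons a₁.symm w.bypass).support := by
    rw [SimpleGraph.Walk.support_cons]
    exact List.mem_cons_of_mem _ w.bypass.start_mem_support
  rw [heq, SimpleGraph.Walk.support_reverse, List.mem_reverse,
    SimpleGraph.Walk.support_cons, List.mem_cons] at hmem
  rcases hmem with h | h
  · exact hne h
  · rw [SimpleGraph.Walk.support_reverse, List.mem_reverse] at h
    exact ht₁ (hmb _ h)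

/-- Walking from outside `S` into `S`, there is a first exit vertex. -/
lemma exit {G : SimpleGraph α} {S : Set α} {a b : α} (w : G.Walk a b)
    (ha : a ∉ S) (hb : b ∈ S) :
    ∃ d, (∃ s ∈ S, G.Adj d s) ∧
      ∃ w' : G.Walk a d, ∀ x ∈ w'.support, x ∉ S ∧ x ∈ w.support := by
  induction w with
  | nil => exact absurd hb ha
  | @cons a c _ h p ih =>
      by_cases hc : c ∈ S
      · exact ⟨a, ⟨c, hc, h⟩, SimpleGraph.Walk.nil, by
          intro x hx
          rw [SimpleGraph.Walk.support_nil, List.mem_singleton] at hx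
          subst hx
          exact ⟨ha, SimpleGraph.Walk.start_mem_support _⟩⟩
      · obtain ⟨d, hd, w', hw'⟩ := ih hc hb
        exact ⟨d, hd, SimpleGraph.Walk.cons h w', by
          intro x hx
          rw [SimpleGraph.Walk.support_cons, List.mem_cons] at hx
          rcases hx with rfl | hx
          · exact ⟨ha, SimpleGraph.Walk.start_mem_support _⟩
          · exact ⟨(hw' x hx).1, by
              rw [SimpleGraph.Walk.support_cons]
              exact List.mem_cons_of_mem _ (hw' x hx).2⟩⟩

lemma reachable_delete_aux {G : SimpleGraph α} {t t' : α} {x y : α} (w : G.Walk x y) :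
    (G \ fromEdgeSet {s(t, t')}).Reachable x y ∨
      (((G \ fromEdgeSet {s(t, t')}).Reachable x t ∨
        (G \ fromEdgeSet {s(t, t')}).Reachable x t') ∧
       ((G \ fromEdgeSet {s(t, t')}).Reachable y t ∨
        (G \ fromEdgeSet {s(t, t')}).Reachable y t')) := by
  induction w with
  | nil => exact Or.inl (Reachable.refl _)
  | @cons x c _ h p ih =>
      by_cases he : s(x, c) = s(t, t')
      · refine Or.inr ⟨?_, ?_⟩
        · rw [Sym2.eq_iff] at he
          rcases he with ⟨rfl, rfl⟩ | ⟨rfl, rfl⟩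
          · exact Or.inl (Reachable.refl _)
          · exact Or.inr (Reachable.refl _)
        · have hc : (G \ fromEdgeSet {s(t, t')}).Reachable c t ∨
              (G \ fromEdgeSet {s(t, t')}).Reachable c t' := by
            rw [Sym2.eq_iff] at he
            rcases he with ⟨rfl, rfl⟩ | ⟨rfl, rfl⟩
            · exact Or.inr (Reachable.refl _)
            · exact Or.inl (Reachable.refl _)
          rcases ih with hxy | ⟨_, hy⟩
          · exact hc.imp hxy.symm.trans hxy.symm.trans
          · exact hy
      · have hadj : (G \ fromEdgeSet {s(t, t')}).Adj x c := by
          simp only [sdiff_adj, fromEdgeSet_adj, Set.mem_singleton_iff]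
          exact ⟨h, fun hc => he hc.1⟩
        rcases ih with hxy | ⟨hcside, hy⟩
        · exact Or.inl (hadj.reachable.trans hxy)
        · exact Or.inr ⟨hcside.imp hadj.reachable.trans hadj.reachable.trans, hy⟩

/-- Every vertex is on one of the two sides of an edge of a connected graph. -/
lemma reachable_delete_or {G : SimpleGraph α} {t t' x : α} (w : G.Walk x t) :
    (G \ fromEdgeSet {s(t, t')}).Reachable x t ∨
      (G \ fromEdgeSet {s(t, t')}).Reachable x t' := by
  rcases reachable_delete_aux (t := t) (t' := t') w with hxy | ⟨hx, _⟩
  · exact Or.inl hxy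
  · exact hx

/-- A walk avoiding the vertex `t` survives deleting the edge `s(t,t')`. -/
lemma reachable_delete_of_avoid {G : SimpleGraph α} {t t' a b : α} (w : G.Walk a b)
    (hw : ∀ x ∈ w.support, x ≠ t) :
    (G \ fromEdgeSet {s(t, t')}).Reachable a b := by
  induction w with
  | nil => exact Reachable.refl _
  | @cons a c _ h p ih =>
      have hadj : (G \ fromEdgeSet {s(t, t')}).Adj a c := by
        simp only [sdiff_adj, fromEdgeSet_adj, Set.mem_singleton_iff]
        refine ⟨h, fun hc => ?_⟩
        rw [Sym2.eq_iff] at hc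
        rcases hc.1 with ⟨rfl, rfl⟩ | ⟨rfl, rfl⟩
        · exact hw a (SimpleGraph.Walk.start_mem_support _) rfl
        · exact hw c (by simp) rfl
      exact hadj.reachable.trans (ih fun x hx => hw x (by simp [hx]))

/-- If the only edge of `G` from `P` to its complement is `(a, b)`, then it is a bridge. -/
lemma bridge_of_cut {G : SimpleGraph α} {a b : α} (hab : G.Adj a b) (P : Set α)
    (ha : a ∈ P) (hb : b ∉ P)
    (hcut : ∀ ⦃x y : α⦄, G.Adj x y → x ∈ P → y ∉ P → x = a ∧ y = b) :
    G.IsBridge s(a, b) := by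
  rw [isBridge_iff_adj_and_forall_walk_mem_edges]
  refine fun p => ?_
  obtain ⟨d, hd, h1, h2⟩ := p.exists_boundary_dart P ha hb
  obtain ⟨hfst, hsnd⟩ := hcut d.adj h1 h2
  have : s(a, b) = d.edge := by
    rw [SimpleGraph.Dart.edge, ← hfst, ← hsnd]
  rw [this, SimpleGraph.Walk.edges]
  exact List.mem_map_of_mem (f := SimpleGraph.Dart.edge) hd


section Glue

variable {ι κ : Type} (T : SimpleGraph ι) (T' : SimpleGraph κ) (S : Set ι)
  (jf : {t : ι // t ∉ S} → κ)

/-- The graph obtained from gluing `T'` (replacing the subtree `S` of `T`) to the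
complement of `S` in `T`, attaching each boundary vertex `t` to `jf t`. -/
def glue : SimpleGraph (κ ⊕ {t : ι // t ∉ S}) where
  Adj a b :=
    match a, b with
    | inl j, inl j' => T'.Adj j j'
    | inr t, inr t' => T.Adj t.1 t'.1
    | inl j, inr t => (∃ s ∈ S, T.Adj t.1 s) ∧ j = jf t
    | inr t, inl j => (∃ s ∈ S, T.Adj t.1 s) ∧ j = jf t
  symm := by
    refine ⟨?_⟩
    rintro (j | t) (j' | t') h
    · exact h.symm
    · exact h
    · exact h
    · exact h.symm
  loopless := by
    refine ⟨?_⟩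
    rintro (j | t) h
    · exact T'.loopless.irrefl _ h
    · exact T.loopless.irrefl _ h

@[simp] lemma glue_adj_inl_inl {j j' : κ} :
    (glue T T' S jf).Adj (inl j) (inl j') ↔ T'.Adj j j' := Iff.rfl

@[simp] lemma glue_adj_inr_inr {t t' : {t : ι // t ∉ S}} :
    (glue T T' S jf).Adj (inr t) (inr t') ↔ T.Adj t.1 t'.1 := Iff.rfl

@[simp] lemma glue_adj_inl_inr {j : κ} {t : {t : ι // t ∉ S}} :
    (glue T T' S jf).Adj (inl j) (inr t) ↔ (∃ s ∈ S, T.Adj t.1 s) ∧ j = jf t := Iff.rfl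

@[simp] lemma glue_adj_inr_inl {j : κ} {t : {t : ι // t ∉ S}} :
    (glue T T' S jf).Adj (inr t) (inl j) ↔ (∃ s ∈ S, T.Adj t.1 s) ∧ j = jf t := Iff.rfl

/-- Two vertices outside `S` in the same component of the complement of `S`. -/
def rel (t t' : {t : ι // t ∉ S}) : Prop :=
  ∃ w : T.Walk t.1 t'.1, ∀ x ∈ w.support, x ∉ S

variable {T S}

lemma rel_refl (t : {t : ι // t ∉ S}) : rel T S t t :=
  ⟨SimpleGraph.Walk.nil, by
    intro x hx
    rw [SimpleGraph.Walk.support_nil, List.mem_singleton] at hx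
    subst hx; exact t.2⟩

lemma rel_symm {t t' : {t : ι // t ∉ S}} (h : rel T S t t') : rel T S t' t := by
  obtain ⟨w, hw⟩ := h
  exact ⟨w.reverse, fun x hx => hw x (by
    rw [SimpleGraph.Walk.support_reverse, List.mem_reverse] at hx; exact hx)⟩

lemma rel_trans {t t' t'' : {t : ι // t ∉ S}} (h : rel T S t t') (h' : rel T S t' t'') :
    rel T S t t'' := by
  obtain ⟨w, hw⟩ := h
  obtain ⟨w', hw'⟩ := h'
  exact ⟨w.append w', fun x hx => by
    rw [SimpleGraph.Walk.mem_support_append_iff] at hx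
    rcases hx with hx | hx
    · exact hw x hx
    · exact hw' x hx⟩

lemma rel_of_adj {t t' : {t : ι // t ∉ S}} (h : T.Adj t.1 t'.1) : rel T S t t' :=
  ⟨SimpleGraph.Walk.cons h SimpleGraph.Walk.nil, by
    intro x hx
    rw [SimpleGraph.Walk.support_cons, List.mem_cons] at hx
    rcases hx with rfl | hx
    · exact t.2
    · rw [SimpleGraph.Walk.support_nil, List.mem_singleton] at hx
      subst hx; exact t'.2⟩

variable (T S)

lemma glue_reach_inr {a b : ι} (w : T.Walk a b) (hw : ∀ x ∈ w.support, x ∉ S)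
    (ha : a ∉ S) (hb : b ∉ S) :
    (glue T T' S jf).Reachable (inr ⟨a, ha⟩) (inr ⟨b, hb⟩) := by
  induction w with
  | nil => rfl
  | @cons u c d h p ih =>
      have hc : c ∉ S := hw c (by simp)
      have hadj : (glue T T' S jf).Adj (inr ⟨u, ha⟩) (inr ⟨c, hc⟩) := h
      exact hadj.reachable.trans (ih (fun x hx => hw x (by simp [hx])) hc hb)

/-- The embedding of `T'` into the glued graph. -/
def glueInl : T' →g glue T T' S jf where
  toFun := inl
  map_rel' := fun h => h

lemma exists_door (hT : T.Connected) {s₀ : ι} (hs₀ : s₀ ∈ S) (t : {t : ι // t ∉ S}) :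
    ∃ d : {t : ι // t ∉ S}, rel T S t d ∧ ∃ s ∈ S, T.Adj d.1 s := by
  obtain ⟨w⟩ := hT t.1 s₀
  obtain ⟨d, hd, w', hw'⟩ := exit w t.2 hs₀
  have hdS : d ∉ S := (hw' d w'.end_mem_support).1
  exact ⟨⟨d, hdS⟩, ⟨w', fun x hx => (hw' x hx).1⟩, hd⟩

end Glue

lemma glue_isTree {ι κ : Type} {T : SimpleGraph ι} {T' : SimpleGraph κ} {S : Set ι}
    {jf : {t : ι // t ∉ S} → κ}
    (hT : T.IsTree) (hT' : T'.IsTree) (hS : (T.induce S).Connected) :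
    (glue T T' S jf).IsTree := by
  classical
  obtain ⟨⟨s₀, hs₀⟩⟩ := hS.nonempty
  obtain ⟨j₀⟩ := hT'.isConnected.nonempty
  choose door hdoorRel hdoorBdry using exists_door T S hT.isConnected hs₀
  have hdoor_unique : ∀ t t' : {t : ι // t ∉ S}, rel T S t t' →
      (∃ s ∈ S, T.Adj t.1 s) → (∃ s ∈ S, T.Adj t'.1 s) → t = t' := by
    rintro t t' ⟨w, hw⟩ ⟨s₁, hs₁, ha₁⟩ ⟨s₂, hs₂, ha₂⟩
    exact Subtype.ext (unique_door hT hS hs₁ hs₂ ha₁ ha₂ w hw)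
  have hdoor_eq : ∀ t t' : {t : ι // t ∉ S}, rel T S t t' → door t = door t' := by
    intro t t' h
    exact hdoor_unique _ _ (rel_trans (rel_symm (hdoorRel t)) (rel_trans h (hdoorRel t')))
      (hdoorBdry t) (hdoorBdry t')
  have hdoor_self : ∀ t : {t : ι // t ∉ S}, (∃ s ∈ S, T.Adj t.1 s) → door t = t := by
    intro t h
    exact hdoor_unique _ _ (rel_symm (hdoorRel t)) (hdoorBdry t) h
  -- bridge for glue edges
  have key_glue : ∀ (t : {t : ι // t ∉ S}) (j : κ),
      (glue T T' S jf).Adj (inr t) (inl j) → (glue T T' S jf).IsBridge s(inr t, inl j) := by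
    intro t j hadj
    have hadj' : (∃ s ∈ S, T.Adj t.1 s) ∧ j = jf t := hadj
    refine bridge_of_cut hadj {k | Sum.elim (fun _ => False) (fun x => rel T S x t) k}
      (rel_refl t) (fun h => h) ?_
    rintro (x' | tx) (y' | ty) hxy hxP hyP
    · exact absurd hxP id
    · exact absurd hxP id
    · -- inr tx to inl y'
      have h1 : (∃ s ∈ S, T.Adj tx.1 s) ∧ y' = jf tx := hxy
      have h2 : tx = t := hdoor_unique tx t hxP h1.1 hadj'.1
      subst h2
      exact ⟨rfl, by rw [h1.2, hadj'.2]⟩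
    · -- inr tx to inr ty
      exfalso
      have h1 : T.Adj tx.1 ty.1 := hxy
      exact hyP (rel_trans (rel_symm (rel_of_adj h1)) hxP)
  -- bridge for inr-inr edges, with S away from t
  have key_inr : ∀ (t t' : {t : ι // t ∉ S}), T.Adj t.1 t'.1 →
      (∀ s ∈ S, ¬(T \ fromEdgeSet {s(t.1, t'.1)}).Reachable t.1 s) →
      (glue T T' S jf).IsBridge s(inr t, inr t') := by
    intro t t' hadj hfar
    have hnr : ¬(T \ fromEdgeSet {s(t.1, t'.1)}).Reachable t.1 t'.1 :=
      ((isBridge_iff).mp ((isAcyclic_iff_forall_adj_isBridge).mp hT.IsAcyclic hadj))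
    refine bridge_of_cut (show (glue T T' S jf).Adj (inr t) (inr t') from hadj)
      {k | Sum.elim (fun _ => False)
        (fun x => (T \ fromEdgeSet {s(t.1, t'.1)}).Reachable t.1 x.1) k}
      (by exact Reachable.refl _) (by exact hnr) ?_
    rintro (x' | tx) (y' | ty) hxy hxP hyP
    · exact absurd hxP id
    · exact absurd hxP id
    · -- inr tx to inl y' : a boundary vertex on the t-side, impossible
      exfalso
      obtain ⟨⟨s, hs, hadjs⟩, -⟩ := (show (∃ s ∈ S, T.Adj tx.1 s) ∧ y' = jf tx from hxy)
      have hne : s(tx.1, s) ≠ s(t.1, t'.1) := by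
        rw [Ne, Sym2.eq_iff]
        rintro (⟨h2, h3⟩ | ⟨h2, h3⟩)
        · exact t'.2 (h3 ▸ hs)
        · exact t.2 (h3 ▸ hs)
      have : (T \ fromEdgeSet {s(t.1, t'.1)}).Adj tx.1 s := by
        simp only [sdiff_adj, fromEdgeSet_adj, Set.mem_singleton_iff]
        exact ⟨hadjs, fun hc => hne hc.1⟩
      exact hfar s hs (hxP.trans this.reachable)
    · -- inr tx to inr ty
      have h1 : T.Adj tx.1 ty.1 := hxy
      by_cases he : s(tx.1, ty.1) = s(t.1, t'.1)
      · rw [Sym2.eq_iff] at he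
        rcases he with ⟨h2, h3⟩ | ⟨h2, h3⟩
        · exact ⟨by rw [Subtype.ext h2], by rw [Subtype.ext h3]⟩
        · exfalso
          have h4 : tx = t' := Subtype.ext h2
          rw [h4] at hxP
          exact hnr hxP
      · exfalso
        refine hyP (hxP.trans (Adj.reachable ?_))
        simp only [sdiff_adj, fromEdgeSet_adj, Set.mem_singleton_iff]
        exact ⟨h1, fun hc => he hc.1⟩
  constructor
  · -- connected
    have hreach : ∀ k : κ ⊕ {t : ι // t ∉ S}, ∃ j : κ, (glue T T' S jf).Reachable k (inl j) := by
      rintro (j | t)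
      · exact ⟨j, Reachable.refl _⟩
      · refine ⟨jf (door t), ?_⟩
        obtain ⟨w, hw⟩ := hdoorRel t
        have h1 : (glue T T' S jf).Reachable (inr t) (inr (door t)) := by
          have := glue_reach_inr T T' S jf w hw t.2 (door t).2
          simpa using this
        have h2 : (glue T T' S jf).Adj (inr (door t)) (inl (jf (door t))) :=
          ⟨hdoorBdry t, rfl⟩
        exact h1.trans h2.reachable
    haveI : Nonempty (κ ⊕ {t : ι // t ∉ S}) := ⟨inl j₀⟩
    refine ⟨fun k k' => ?_⟩
    obtain ⟨j, hj⟩ := hreach k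
    obtain ⟨j', hj'⟩ := hreach k'
    have : (glue T T' S jf).Reachable (inl j) (inl j') :=
      Reachable.map (glueInl T T' S jf) (hT'.isConnected j j')
    exact (hj.trans this).trans hj'.symm
  · -- acyclic
    rw [isAcyclic_iff_forall_adj_isBridge]
    rintro (j | t) (j' | t') hadj
    · -- inl-inl
      have hadj' : T'.Adj j j' := hadj
      have hbr : ¬(T' \ fromEdgeSet {s(j, j')}).Reachable j j' :=
        ((isBridge_iff).mp ((isAcyclic_iff_forall_adj_isBridge).mp hT'.IsAcyclic hadj'))
      refine bridge_of_cut hadj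
        {k | Sum.elim (fun x => (T' \ fromEdgeSet {s(j, j')}).Reachable j x)
          (fun t => (T' \ fromEdgeSet {s(j, j')}).Reachable j (jf (door t))) k}
        (by exact Reachable.refl _) (by exact hbr) ?_
      rintro (x' | tx) (y' | ty) hxy hxP hyP
      · have hxy' : T'.Adj x' y' := hxy
        by_cases he : s(x', y') = s(j, j')
        · rw [Sym2.eq_iff] at he
          rcases he with ⟨rfl, rfl⟩ | ⟨rfl, rfl⟩
          · exact ⟨rfl, rfl⟩
          · exact absurd hxP hbr
        · exfalso
          refine hyP (hxP.trans (Adj.reachable ?_))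
          simp only [sdiff_adj, fromEdgeSet_adj, Set.mem_singleton_iff]
          exact ⟨hxy', fun hc => he hc.1⟩
      · exfalso
        have h1 : (∃ s ∈ S, T.Adj ty.1 s) ∧ x' = jf ty := hxy
        have h2 : door ty = ty := hdoor_self ty h1.1
        refine hyP ?_
        show (T' \ fromEdgeSet {s(j, j')}).Reachable j (jf (door ty))
        rw [h2, ← h1.2]
        exact hxP
      · exfalso
        have h1 : (∃ s ∈ S, T.Adj tx.1 s) ∧ y' = jf tx := hxy
        have h2 : door tx = tx := hdoor_self tx h1.1
        refine hyP ?_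
        show (T' \ fromEdgeSet {s(j, j')}).Reachable j y'
        rw [h1.2, ← h2]
        exact hxP
      · exfalso
        have h1 : T.Adj tx.1 ty.1 := hxy
        have h2 : door tx = door ty := hdoor_eq _ _ (rel_of_adj h1)
        refine hyP ?_
        show (T' \ fromEdgeSet {s(j, j')}).Reachable j (jf (door ty))
        rw [← h2]
        exact hxP
    · -- inl-inr: swap
      rw [Sym2.eq_swap]
      exact key_glue t' j hadj.symm
    · exact key_glue t j' hadj
    · -- inr-inr
      have hadj' : T.Adj t.1 t'.1 := hadj
      have hSconst : ∀ s ∈ S, ∀ s' ∈ S,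
          (T \ fromEdgeSet {s(t.1, t'.1)}).Reachable s s' := by
        intro s hs s' hs'
        obtain ⟨w, hw⟩ := exists_walk_in hS hs hs'
        exact reachable_delete_of_avoid w (fun x hx hxt => t.2 (hxt ▸ hw x hx))
      by_cases hside : (T \ fromEdgeSet {s(t.1, t'.1)}).Reachable t.1 s₀
      · -- S is on the t side; prove the bridge from t'
        rw [Sym2.eq_swap]
        have hswap : s(t'.1, t.1) = s(t.1, t'.1) := Sym2.eq_swap
        refine key_inr t' t hadj'.symm ?_
        intro s hs h
        rw [hswap] at h
        have h1 : (T \ fromEdgeSet {s(t.1, t'.1)}).Reachable t.1 s :=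
          hside.trans (hSconst s₀ hs₀ s hs)
        have hnr : ¬(T \ fromEdgeSet {s(t.1, t'.1)}).Reachable t.1 t'.1 :=
          ((isBridge_iff).mp ((isAcyclic_iff_forall_adj_isBridge).mp hT.IsAcyclic hadj'))
        exact hnr (h1.trans h.symm)
      · refine key_inr t t' hadj' ?_
        intro s hs h
        exact hside (h.trans (hSconst s hs s₀ hs₀))

lemma glue_reach_inr_induce {ι κ : Type} {T : SimpleGraph ι} {T' : SimpleGraph κ} {S : Set ι}
    {jf : {t : ι // t ∉ S} → κ} {A : Set (κ ⊕ {t : ι // t ∉ S})} {C : Set ι}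
    (hC : ∀ x ∈ C, x ∉ S) (hCA : ∀ x, ∀ hx : x ∈ C, inr ⟨x, hC x hx⟩ ∈ A)
    {a b : ι} (w : T.Walk a b) :
    (∀ x ∈ w.support, x ∈ C) → ∀ (ha : a ∈ C) (hb : b ∈ C),
      ((glue T T' S jf).induce A).Reachable ⟨inr ⟨a, hC a ha⟩, hCA a ha⟩
        ⟨inr ⟨b, hC b hb⟩, hCA b hb⟩ := by
  induction w with
  | nil => intro _ ha hb; rfl
  | @cons u c d h p ih =>
      intro hw ha hb
      have hc : c ∈ C := hw c (by simp)
      have hadj : ((glue T T' S jf).induce A).Adj ⟨inr ⟨u, hC u ha⟩, hCA u ha⟩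
          ⟨inr ⟨c, hC c hc⟩, hCA c hc⟩ := h
      exact hadj.reachable.trans (ih (fun x hx => hw x (by simp [hx])) hc hb)

lemma glue_reach_inl_induce {ι κ : Type} {T : SimpleGraph ι} {T' : SimpleGraph κ} {S : Set ι}
    {jf : {t : ι // t ∉ S} → κ} {A : Set (κ ⊕ {t : ι // t ∉ S})} {D : Set κ}
    (hDA : ∀ x ∈ D, inl x ∈ A)
    {a b : κ} (w : T'.Walk a b) :
    (∀ x ∈ w.support, x ∈ D) → ∀ (ha : a ∈ D) (hb : b ∈ D),
      ((glue T T' S jf).induce A).Reachable ⟨inl a, hDA a ha⟩ ⟨inl b, hDA b hb⟩ := by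
  induction w with
  | nil => intro _ ha hb; rfl
  | @cons u c d h p ih =>
      intro hw ha hb
      have hc : c ∈ D := hw c (by simp)
      have hadj : ((glue T T' S jf).induce A).Adj ⟨inl u, hDA u ha⟩ ⟨inl c, hDA c hc⟩ := h
      exact hadj.reachable.trans (ih (fun x hx => hw x (by simp [hx])) hc hb)


end Stmt6

open SimpleGraph Sum in
/-- Replacing the part of `G` inside `V_S` by a new graph `G'` on `V_S` keeps the
treewidth bounded by `W`, provided `G'` together with all virtual edges admits a
tree decomposition of width `≤ W` and the original decomposition has width `≤ W`.
The resulting graph `H` consists of the edges of `G'` together with all edges of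
`G` covered by a bag outside `S`. -/
theorem stmt_6 {V I J : Type} [Fintype V] (G G' : SimpleGraph V) (W : ℕ)
    (td : TreeDecompOn V I Set.univ G)
    (hW : ∀ t : I, (td.bag t).ncard ≤ W + 1)
    (S : Set I) (hS : (td.T.induce S).Connected)
    (hG' : ∀ u v : V, G'.Adj u v →
      u ∈ ⋃ t ∈ S, td.bag t ∧ v ∈ ⋃ t ∈ S, td.bag t)
    (td' : TreeDecompOn V J (⋃ t ∈ S, td.bag t)
      (G' ⊔ SimpleGraph.fromRel (fun u v =>
        u ∈ ⋃ t ∈ S, td.bag t ∧ v ∈ ⋃ t ∈ S, td.bag t ∧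
        ∃ t, t ∉ S ∧ u ∈ td.bag t ∧ v ∈ td.bag t)))
    (hW' : ∀ j : J, (td'.bag j).ncard ≤ W + 1) :
    ∃ (K : Type) (tdH : TreeDecompOn V K Set.univ
        (G' ⊔ SimpleGraph.fromRel (fun u v =>
          G.Adj u v ∧ ∃ t, t ∉ S ∧ u ∈ td.bag t ∧ v ∈ td.bag t))),
      ∀ k : K, (tdH.bag k).ncard ≤ W + 1 := by
  classical
  have hJne : Nonempty J := td'.isTree.isConnected.nonempty
  -- choose, for each boundary vertex, a bag of `td'` containing its trace on `(⋃ t ∈ S, td.bag t)`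
  have hbag : ∀ t : {t : I // t ∉ S}, ∃ j : J, (∃ s ∈ S, td.T.Adj t.1 s) →
      ∀ v, v ∈ td.bag t.1 → v ∈ (⋃ t ∈ S, td.bag t) → v ∈ td'.bag j := by
    intro t
    by_cases hbd : ∃ s ∈ S, td.T.Adj t.1 s
    · have hfin : (td.bag t.1 ∩ (⋃ t ∈ S, td.bag t)).Finite := Set.toFinite _
      obtain ⟨j, hj⟩ := Stmt6.common_bag td'.isTree td'.bag hfin.toFinset
        (by
          intro v hv
          rw [Set.Finite.mem_toFinset] at hv
          exact td'.conn v hv.2)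
        (by
          intro u hu v hv
          rw [Set.Finite.mem_toFinset] at hu hv
          by_cases huv : u = v
          · subst huv
            obtain ⟨⟨j, hj⟩⟩ := (td'.conn u hu.2).nonempty
            exact ⟨j, hj, hj⟩
          · refine td'.cover (u := u) (v := v) ?_
            rw [SimpleGraph.sup_adj]
            right
            rw [SimpleGraph.fromRel_adj]
            exact ⟨huv, Or.inl ⟨hu.2, hv.2, t.1, t.2, hu.1, hv.1⟩⟩)
      exact ⟨j, fun _ v hv1 hv2 => hj v (by rw [Set.Finite.mem_toFinset]; exact ⟨hv1, hv2⟩)⟩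
    · exact ⟨hJne.some, fun h => absurd h hbd⟩
  choose jf hjf using hbag
  refine ⟨J ⊕ {t : I // t ∉ S},
    { T := Stmt6.glue td.T td'.T S jf
      isTree := Stmt6.glue_isTree td.isTree td'.isTree hS
      bag := Sum.elim td'.bag (fun t => td.bag t.1)
      bag_sub := fun _ => Set.subset_univ _
      cover := ?_
      conn := ?_ }, ?_⟩
  · -- cover
    intro u v huv
    rw [SimpleGraph.sup_adj] at huv
    rcases huv with h | h
    · obtain ⟨j, hj⟩ := td'.cover (by exact Or.inl h)
      exact ⟨inl j, hj⟩
    · rw [SimpleGraph.fromRel_adj] at h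
      rcases h.2 with ⟨-, t, ht, hu, hv⟩ | ⟨-, t, ht, hu, hv⟩
      · exact ⟨inr ⟨t, ht⟩, hu, hv⟩
      · exact ⟨inr ⟨t, ht⟩, hv, hu⟩
  · -- conn
    intro v _hv
    by_cases hv : v ∈ (⋃ t ∈ S, td.bag t)
    · -- v ∈ (⋃ t ∈ S, td.bag t)
      have hB' := td'.conn v hv
      have hDA : ∀ x ∈ {j : J | v ∈ td'.bag j},
          inl x ∈ {k : J ⊕ {t : I // t ∉ S} |
            v ∈ Sum.elim td'.bag (fun t => td.bag t.1) k} := fun x hx => hx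
      obtain ⟨⟨j₁, hj₁⟩⟩ := hB'.nonempty
      rw [SimpleGraph.connected_iff_exists_forall_reachable]
      refine ⟨⟨inl j₁, hDA j₁ hj₁⟩, ?_⟩
      rintro ⟨(j | t), hk⟩
      · obtain ⟨w, hw⟩ := Stmt6.exists_walk_in hB' hj₁ hk
        exact Stmt6.glue_reach_inl_induce (T := td.T) (jf := jf) hDA w hw hj₁ hk
      · have hC := td.conn v (Set.mem_univ v)
        obtain ⟨s₁, hs₁S, hvs₁⟩ : ∃ s ∈ S, v ∈ td.bag s := by
          simpa using hv
        have htk : t.1 ∈ {x : I | v ∈ td.bag x} := hk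
        obtain ⟨w, hw⟩ := Stmt6.exists_walk_in hC htk hvs₁
        obtain ⟨d, hdbd, w', hw'⟩ := Stmt6.exit w t.2 hs₁S
        have hC'S : ∀ x ∈ {x : I | v ∈ td.bag x ∧ x ∉ S}, x ∉ S := fun x hx => hx.2
        have hC'A : ∀ x, ∀ hx : x ∈ {x : I | v ∈ td.bag x ∧ x ∉ S},
            inr ⟨x, hC'S x hx⟩ ∈ {k : J ⊕ {t : I // t ∉ S} |
              v ∈ Sum.elim td'.bag (fun t => td.bag t.1) k} := fun x hx => hx.1
        have hsupp : ∀ x ∈ w'.support, x ∈ {x : I | v ∈ td.bag x ∧ x ∉ S} :=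
          fun x hx => ⟨hw x (hw' x hx).2, (hw' x hx).1⟩
        have htC' : t.1 ∈ {x : I | v ∈ td.bag x ∧ x ∉ S} := ⟨hk, t.2⟩
        have hdC' : d ∈ {x : I | v ∈ td.bag x ∧ x ∉ S} := hsupp d w'.end_mem_support
        have r1 := Stmt6.glue_reach_inr_induce (T' := td'.T) (jf := jf) hC'S hC'A w' hsupp htC' hdC'
        have hd : d ∉ S := hdC'.2
        have hjd : v ∈ td'.bag (jf ⟨d, hd⟩) := hjf ⟨d, hd⟩ hdbd v hdC'.1 hv
        have hadj : ((Stmt6.glue td.T td'.T S jf).induce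
            {k : J ⊕ {t : I // t ∉ S} | v ∈ Sum.elim td'.bag (fun t => td.bag t.1) k}).Adj
            ⟨inr ⟨d, hC'S d hdC'⟩, hC'A d hdC'⟩ ⟨inl (jf ⟨d, hd⟩), hjd⟩ := ⟨hdbd, rfl⟩
        obtain ⟨w₂, hw₂⟩ := Stmt6.exists_walk_in hB' (show jf ⟨d, hd⟩ ∈ _ from hjd) hj₁
        have r3 := Stmt6.glue_reach_inl_induce (T := td.T) (jf := jf) hDA w₂ hw₂ hjd hj₁
        have hfinal := ((r1.trans hadj.reachable).trans r3).symm
        have hept : (⟨inr ⟨t.1, hC'S t.1 htC'⟩, hC'A t.1 htC'⟩ :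
            {k : J ⊕ {t : I // t ∉ S} //
              k ∈ {k | v ∈ Sum.elim td'.bag (fun t => td.bag t.1) k}}) = ⟨inr t, hk⟩ :=
          Subtype.ext (congrArg inr (Subtype.ext rfl))
        exact hept ▸ hfinal
    · -- v ∉ (⋃ t ∈ S, td.bag t)
      have hninl : ∀ j : J, v ∉ td'.bag j := fun j hj => hv (td'.bag_sub j hj)
      have hC := td.conn v (Set.mem_univ v)
      have hCS : ∀ x ∈ {t : I | v ∈ td.bag t}, x ∉ S := by
        intro x hx hxS
        exact hv (Set.mem_biUnion hxS hx)
      have hCA : ∀ x, ∀ hx : x ∈ {t : I | v ∈ td.bag t},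
          inr ⟨x, hCS x hx⟩ ∈ {k : J ⊕ {t : I // t ∉ S} |
            v ∈ Sum.elim td'.bag (fun t => td.bag t.1) k} := fun x hx => hx
      obtain ⟨⟨t₀, ht₀⟩⟩ := hC.nonempty
      rw [SimpleGraph.connected_iff_exists_forall_reachable]
      refine ⟨⟨inr ⟨t₀, hCS t₀ ht₀⟩, hCA t₀ ht₀⟩, ?_⟩
      rintro ⟨(j | t), hk⟩
      · exact absurd hk (hninl j)
      · have htC : t.1 ∈ {t : I | v ∈ td.bag t} := hk
        obtain ⟨w, hw⟩ := Stmt6.exists_walk_in hC ht₀ htC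
        have hr := Stmt6.glue_reach_inr_induce (T' := td'.T) (jf := jf) hCS hCA w hw ht₀ htC
        have hept : (⟨inr ⟨t.1, hCS t.1 htC⟩, hCA t.1 htC⟩ :
            {k : J ⊕ {t : I // t ∉ S} //
              k ∈ {k | v ∈ Sum.elim td'.bag (fun t => td.bag t.1) k}}) = ⟨inr t, hk⟩ :=
          Subtype.ext (congrArg inr (Subtype.ext rfl))
        exact hept ▸ hr
  · -- widths
    rintro (j | t)
    · exact hW' j
    · exact hW t.1
end

section
/- Let (T, χ) be a tree decomposition of a graph G of width ≤ W, S a subtree of T, and (S', χ') a tree decomposition of width ≤ W of some graph on V_S = ⋃_{t ∈ V(S)} χ(t). Construct T'' by taking the disjoint union of S' and the components T_1, …, T_r of T − V(S), and connecting each T_i (via its node t_i adjacent to S in T) to a node s_i* of S' whose bag χ'(s_i*) contains B_i = V_S ∩ ⋃_{t ∈ V(T_i)} χ(t), assuming such nodes exist. Define χ'' to agree with χ' on V(S') and with χ on the nodes of each T_i. Then T'' is a tree, and every bag of (T'', χ'') has size at most W + 1. -/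
open SimpleGraph Sum

private lemma reach_aux {α : Type} (H : SimpleGraph α) (f : α → Prop)
    (h : ∀ x y : α, H.Adj x y → (f x ↔ f y)) {a b : α} (hr : H.Reachable a b) :
    f a ↔ f b := by
  obtain ⟨w⟩ := hr
  induction w with
  | nil => exact Iff.rfl
  | cons hadj p ih => exact (h _ _ hadj).trans ih

private lemma no_reach_of_cut {α : Type} (H : SimpleGraph α) (f : α → Prop)
    (h : ∀ x y : α, H.Adj x y → (f x ↔ f y)) {a b : α} (hfa : f a) (hfb : ¬ f b) :
    ¬ H.Reachable a b := fun hr => hfb ((reach_aux H f h hr).mp hfa)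

private lemma induce_reach_del {α : Type} (G : SimpleGraph α) (A : Set α) {x y : A}
    (hr : (G.induce A).Reachable x y) (E : Set (Sym2 α))
    (hE : ∀ a b : α, a ∈ A → b ∈ A → s(a, b) ∉ E) :
    (G \ SimpleGraph.fromEdgeSet E).Reachable x.1 y.1 := by
  obtain ⟨w⟩ := hr
  induction w with
  | nil => exact Reachable.refl _
  | @cons p q r hadj w ih =>
    refine (Adj.reachable ?_).trans ih
    rw [sdiff_adj, fromEdgeSet_adj]
    exact ⟨hadj, fun hm => hE p.1 q.1 p.2 q.2 hm.1⟩



/-- Gluing a local tree decomposition `(S', χ')` of a graph on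
`V_S = ⋃_{t ∈ S} χ(t)` back into a global tree decomposition `(T, χ)`:
take the disjoint union of `S'` and the components of `T − V(S)` (connected
components of the induced graph on `Sᶜ`), and attach each component (via its
unique node adjacent to `S` in `T`) to a node `s_i* = sstar C` of `S'` whose bag
contains `B_i`.  The glued structure is a tree, and with bags given by `χ'` on
`S'`-nodes and by `χ` on component nodes, every bag has size at most `W + 1`. -/
theorem stmt_10 {V I J : Type} [Fintype V] (G G' : SimpleGraph V) (W : ℕ)
    (td : TreeDecompOn V I Set.univ G)
    (hW : ∀ t : I, (td.bag t).ncard ≤ W + 1)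
    (S : Set I) (hS : (td.T.induce S).Connected)
    (td' : TreeDecompOn V J (⋃ t ∈ S, td.bag t) G')
    (hW' : ∀ j : J, (td'.bag j).ncard ≤ W + 1)
    (sstar : (td.T.induce Sᶜ).ConnectedComponent → J)
    (hsstar : ∀ C : (td.T.induce Sᶜ).ConnectedComponent,
      ((⋃ t ∈ S, td.bag t) ∩
        {x : V | ∃ u : ↥(Sᶜ),
          (td.T.induce Sᶜ).connectedComponentMk u = C ∧ x ∈ td.bag u.1})
        ⊆ td'.bag (sstar C)) :
    (SimpleGraph.fromRel (fun x y : J ⊕ ↥(Sᶜ) =>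
      match x, y with
      | Sum.inl a, Sum.inl b => td'.T.Adj a b
      | Sum.inr a, Sum.inr b => td.T.Adj a.1 b.1
      | Sum.inl a, Sum.inr t => (∃ s ∈ S, td.T.Adj s t.1) ∧
          a = sstar ((td.T.induce Sᶜ).connectedComponentMk t)
      | Sum.inr t, Sum.inl a => (∃ s ∈ S, td.T.Adj s t.1) ∧
          a = sstar ((td.T.induce Sᶜ).connectedComponentMk t))).IsTree ∧
    ∀ k : J ⊕ ↥(Sᶜ),
      (Sum.elim td'.bag (fun t : ↥(Sᶜ) => td.bag t.1) k).ncard ≤ W + 1 := by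
  classical
  set cc : ↥(Sᶜ) → (td.T.induce Sᶜ).ConnectedComponent :=
    fun u => (td.T.induce Sᶜ).connectedComponentMk u with hcc
  set G'' := SimpleGraph.fromRel (fun x y : J ⊕ ↥(Sᶜ) =>
      match x, y with
      | Sum.inl a, Sum.inl b => td'.T.Adj a b
      | Sum.inr a, Sum.inr b => td.T.Adj a.1 b.1
      | Sum.inl a, Sum.inr t => (∃ s ∈ S, td.T.Adj s t.1) ∧ a = sstar (cc t)
      | Sum.inr t, Sum.inl a => (∃ s ∈ S, td.T.Adj s t.1) ∧ a = sstar (cc t))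
    with hG''
  -- adjacency characterizations
  have hll : ∀ a b : J, G''.Adj (inl a) (inl b) ↔ td'.T.Adj a b := by
    intro a b
    rw [hG'', fromRel_adj]
    constructor
    · rintro ⟨hne, h | h⟩
      · exact h
      · exact h.symm
    · intro h
      exact ⟨fun he => h.ne (by injection he), Or.inl h⟩
  have hrr : ∀ u v : ↥(Sᶜ), G''.Adj (inr u) (inr v) ↔ td.T.Adj u.1 v.1 := by
    intro u v
    rw [hG'', fromRel_adj]
    constructor
    · rintro ⟨hne, h | h⟩
      · exact h
      · exact h.symm
    · intro h
      refine ⟨fun he => h.ne ?_, Or.inl h⟩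
      have : u = v := by injection he
      rw [this]
  have hlr : ∀ (a : J) (t : ↥(Sᶜ)), G''.Adj (inl a) (inr t) ↔
      ((∃ s ∈ S, td.T.Adj s t.1) ∧ a = sstar (cc t)) := by
    intro a t
    rw [hG'', fromRel_adj]
    constructor
    · rintro ⟨hne, h | h⟩ <;> exact h
    · intro h
      exact ⟨fun he => by injection he, Or.inl h⟩
  -- key structural lemmas
  obtain ⟨⟨s₀, hs₀⟩⟩ := hS.nonempty
  have hattach : ∀ u : ↥(Sᶜ), ∃ t : ↥(Sᶜ),
      (∃ s ∈ S, td.T.Adj s t.1) ∧ (td.T.induce Sᶜ).Reachable u t := by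
    intro u
    obtain ⟨w⟩ := td.isTree.1.preconnected u.1 s₀
    have aux : ∀ (x y : I) (w : td.T.Walk x y), y ∈ S → ∀ (hx : x ∈ Sᶜ), ∃ t : ↥(Sᶜ),
        (∃ s ∈ S, td.T.Adj s t.1) ∧ (td.T.induce Sᶜ).Reachable ⟨x, hx⟩ t := by
      intro x y w
      induction w with
      | nil => exact fun hy hx => absurd hy hx
      | @cons p q _ hadj w ih =>
        intro hy hx
        by_cases hq : q ∈ S
        · exact ⟨⟨p, hx⟩, ⟨q, hq, hadj.symm⟩, Reachable.refl _⟩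
        · obtain ⟨t, hts, hrt⟩ := ih hy hq
          refine ⟨t, hts, (Adj.reachable ?_).trans hrt⟩
          exact hadj
    obtain ⟨t, hts, hrt⟩ := aux u.1 s₀ w hs₀ u.2
    exact ⟨t, hts, hrt⟩
  have attach_unique : ∀ t t' : ↥(Sᶜ), cc t = cc t' →
      (∃ s ∈ S, td.T.Adj s t.1) → (∃ s' ∈ S, td.T.Adj s' t'.1) → t = t' := by
    intro t t' hcc' h1 h2
    obtain ⟨s, hs, hst⟩ := h1
    obtain ⟨s', hs', hst'⟩ := h2
    by_contra hne
    have hbr : ¬ (td.T \ fromEdgeSet {s(s, t.1)}).Reachable s t.1 :=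
      (isBridge_iff.mp ((isAcyclic_iff_forall_adj_isBridge.mp td.isTree.2) hst))
    apply hbr
    have r2 : (td.T \ fromEdgeSet {s(s, t.1)}).Reachable s s' := by
      refine induce_reach_del td.T S (hS.preconnected ⟨s, hs⟩ ⟨s', hs'⟩) _ ?_
      intro p q hp hq hm
      rw [Set.mem_singleton_iff, Sym2.eq_iff] at hm
      rcases hm with ⟨-, h2'⟩ | ⟨h1', -⟩
      · exact t.2 (by rw [← h2']; exact hq)
      · exact t.2 (by rw [← h1']; exact hp)
    have r1 : (td.T \ fromEdgeSet {s(s, t.1)}).Adj s' t'.1 := by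
      rw [sdiff_adj, fromEdgeSet_adj]
      refine ⟨hst', ?_⟩
      rintro ⟨hm, -⟩
      rw [Set.mem_singleton_iff, Sym2.eq_iff] at hm
      rcases hm with ⟨-, h2'⟩ | ⟨h1', -⟩
      · exact hne (Subtype.ext h2'.symm ▸ rfl)
      · exact t.2 (by rw [← h1']; exact hs')
    have r3 : (td.T \ fromEdgeSet {s(s, t.1)}).Reachable t'.1 t.1 := by
      refine induce_reach_del td.T Sᶜ ((ConnectedComponent.exact hcc').symm) _ ?_
      intro p q hp hq hm
      rw [Set.mem_singleton_iff, Sym2.eq_iff] at hm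
      rcases hm with ⟨h1', -⟩ | ⟨-, h2'⟩
      · exact hp (by rw [h1']; exact hs)
      · exact hq (by rw [h2']; exact hs)
    exact (r2.trans r1.reachable).trans r3
  -- homomorphisms
  let hom1 : td'.T →g G'' := ⟨Sum.inl, fun h => (hll _ _).mpr h⟩
  let hom2 : (td.T.induce Sᶜ) →g G'' := ⟨Sum.inr, fun h => (hrr _ _).mpr h⟩
  -- connectivity
  have hreach_ll : ∀ a b : J, G''.Reachable (inl a) (inl b) :=
    fun a b => (td'.isTree.isConnected.preconnected a b).map hom1
  have hreach_r : ∀ u : ↥(Sᶜ), ∃ j : J, G''.Reachable (inr u) (inl j) := by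
    intro u
    obtain ⟨t, hts, hrt⟩ := hattach u
    refine ⟨sstar (cc t), (hrt.map hom2).trans (Adj.reachable ?_)⟩
    exact ((hlr _ _).mpr ⟨hts, rfl⟩).symm
  have hconn : G''.Connected := by
    rw [connected_iff]
    refine ⟨fun x y => ?_, ⟨inl (Classical.choice td'.isTree.isConnected.nonempty)⟩⟩
    match x, y with
    | inl a, inl b => exact hreach_ll a b
    | inl a, inr u =>
      obtain ⟨j, hj⟩ := hreach_r u
      exact (hreach_ll a j).trans hj.symm
    | inr u, inl b =>
      obtain ⟨j, hj⟩ := hreach_r u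
      exact hj.trans (hreach_ll j b)
    | inr u, inr v =>
      obtain ⟨j, hj⟩ := hreach_r u
      obtain ⟨j', hj'⟩ := hreach_r v
      exact (hj.trans (hreach_ll j j')).trans hj'.symm
  -- bridge lemmas
  have L1 : ∀ a b : J, td'.T.Adj a b →
      ¬ (G'' \ fromEdgeSet {s(inl a, inl b)}).Reachable (inl a) (inl b) := by
    intro a b hab
    have hbr : ¬ (td'.T \ fromEdgeSet {s(a, b)}).Reachable a b :=
      (isBridge_iff.mp ((isAcyclic_iff_forall_adj_isBridge.mp td'.isTree.2) hab))
    have hcut : ∀ x y : J ⊕ ↥(Sᶜ), (G'' \ fromEdgeSet {s(inl a, inl b)}).Adj x y →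
        (((fun x => (td'.T \ fromEdgeSet {s(a, b)}).Reachable
          (Sum.elim id (fun u => sstar (cc u)) x) a) x : Prop) ↔
         (fun x => (td'.T \ fromEdgeSet {s(a, b)}).Reachable
          (Sum.elim id (fun u => sstar (cc u)) x) a) y) := by
      intro x y hxy
      rw [sdiff_adj] at hxy
      obtain ⟨hxy', hne⟩ := hxy
      have hne' : s(x, y) ≠ s(inl a, inl b) :=
        fun hm => hne ((fromEdgeSet_adj _).mpr ⟨hm, hxy'.ne⟩)
      match x, y with
      | inl x, inl y =>
        have hA : td'.T.Adj x y := (hll x y).mp hxy'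
        have hAe : (td'.T \ fromEdgeSet {s(a, b)}).Adj x y := by
          rw [sdiff_adj, fromEdgeSet_adj]
          refine ⟨hA, ?_⟩
          rintro ⟨hm, -⟩
          apply hne'
          rw [Set.mem_singleton_iff] at hm
          have := congrArg (Sym2.map (Sum.inl : J → J ⊕ ↥(Sᶜ))) hm
          simpa [Sym2.map_pair_eq] using this
        exact ⟨fun h => hAe.symm.reachable.trans h, fun h => hAe.reachable.trans h⟩
      | inl x, inr u =>
        have hx : x = sstar (cc u) := ((hlr x u).mp hxy').2
        simp only [Sum.elim_inl, Sum.elim_inr, id]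
        rw [hx]
      | inr u, inl x =>
        have hx : x = sstar (cc u) := ((hlr x u).mp hxy'.symm).2
        simp only [Sum.elim_inl, Sum.elim_inr, id]
        rw [hx]
      | inr u, inr v =>
        have hA : td.T.Adj u.1 v.1 := (hrr u v).mp hxy'
        have hC : cc u = cc v :=
          ConnectedComponent.sound (SimpleGraph.Adj.reachable
            (show (td.T.induce Sᶜ).Adj u v from hA))
        simp only [Sum.elim_inr]
        rw [hC]
    exact no_reach_of_cut _ _ hcut (a := Sum.inl a) (b := Sum.inl b)
      (Reachable.refl a) (fun h => hbr h.symm)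
  have L2 : ∀ u v : ↥(Sᶜ), td.T.Adj u.1 v.1 →
      ¬ (G'' \ fromEdgeSet {s(inr u, inr v)}).Reachable (inr u) (inr v) := by
    intro u v huv
    have hbr : ¬ (td.T \ fromEdgeSet {s(u.1, v.1)}).Reachable u.1 v.1 :=
      (isBridge_iff.mp ((isAcyclic_iff_forall_adj_isBridge.mp td.isTree.2) huv))
    have hcut : ∀ x y : J ⊕ ↥(Sᶜ), (G'' \ fromEdgeSet {s(inr u, inr v)}).Adj x y →
        (((fun x => (td.T \ fromEdgeSet {s(u.1, v.1)}).Reachable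
          (Sum.elim (fun _ => s₀) (fun w => w.1) x) u.1) x : Prop) ↔
         (fun x => (td.T \ fromEdgeSet {s(u.1, v.1)}).Reachable
          (Sum.elim (fun _ => s₀) (fun w => w.1) x) u.1) y) := by
      intro x y hxy
      rw [sdiff_adj] at hxy
      obtain ⟨hxy', hne⟩ := hxy
      have hne' : s(x, y) ≠ s(inr u, inr v) :=
        fun hm => hne ((fromEdgeSet_adj _).mpr ⟨hm, hxy'.ne⟩)
      have key : ∀ (j : J) (w : ↥(Sᶜ)), G''.Adj (inl j) (inr w) →
          ((td.T \ fromEdgeSet {s(u.1, v.1)}).Reachable s₀ u.1 ↔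
            (td.T \ fromEdgeSet {s(u.1, v.1)}).Reachable w.1 u.1) := by
        intro j w hjw
        obtain ⟨⟨s, hs, hsw⟩, -⟩ := (hlr j w).mp hjw
        have hadj : (td.T \ fromEdgeSet {s(u.1, v.1)}).Adj s w.1 := by
          rw [sdiff_adj, fromEdgeSet_adj]
          refine ⟨hsw, ?_⟩
          rintro ⟨hm, -⟩
          rw [Set.mem_singleton_iff, Sym2.eq_iff] at hm
          rcases hm with ⟨h1', -⟩ | ⟨h1', -⟩
          · exact u.2 (by rw [← h1']; exact hs)
          · exact v.2 (by rw [← h1']; exact hs)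
        have hs₀s : (td.T \ fromEdgeSet {s(u.1, v.1)}).Reachable s₀ s := by
          refine induce_reach_del td.T S (hS.preconnected ⟨s₀, hs₀⟩ ⟨s, hs⟩) _ ?_
          intro p q hp hq hm
          rw [Set.mem_singleton_iff, Sym2.eq_iff] at hm
          rcases hm with ⟨h1', -⟩ | ⟨-, h2'⟩
          · exact u.2 (by rw [← h1']; exact hp)
          · exact u.2 (by rw [← h2']; exact hq)
        exact ⟨fun h => (hadj.reachable.symm.trans hs₀s.symm).trans h,
               fun h => (hs₀s.trans hadj.reachable).trans h⟩
      match x, y with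
      | inl p, inl q => exact Iff.rfl
      | inl p, inr w => exact key p w hxy'
      | inr w, inl p => exact (key p w hxy'.symm).symm
      | inr w, inr w' =>
        have hA : td.T.Adj w.1 w'.1 := (hrr w w').mp hxy'
        have hAe : (td.T \ fromEdgeSet {s(u.1, v.1)}).Adj w.1 w'.1 := by
          rw [sdiff_adj, fromEdgeSet_adj]
          refine ⟨hA, ?_⟩
          rintro ⟨hm, -⟩
          rw [Set.mem_singleton_iff, Sym2.eq_iff] at hm
          apply hne'
          rcases hm with ⟨h1', h2'⟩ | ⟨h1', h2'⟩
          · rw [show w = u from Subtype.ext h1', show w' = v from Subtype.ext h2']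
          · rw [show w = v from Subtype.ext h1', show w' = u from Subtype.ext h2',
              Sym2.eq_swap]
        exact ⟨fun h => hAe.symm.reachable.trans h, fun h => hAe.reachable.trans h⟩
    exact no_reach_of_cut _ _ hcut (a := Sum.inr u) (b := Sum.inr v)
      (Reachable.refl u.1) (fun h => hbr h.symm)
  have L3 : ∀ (a : J) (t : ↥(Sᶜ)), G''.Adj (inl a) (inr t) →
      ¬ (G'' \ fromEdgeSet {s(inl a, inr t)}).Reachable (inl a) (inr t) := by
    intro a t hadj
    obtain ⟨hts, ha⟩ := (hlr a t).mp hadj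
    intro hr
    have hcut : ∀ x y : J ⊕ ↥(Sᶜ), (G'' \ fromEdgeSet {s(inl a, inr t)}).Adj x y →
        ((Sum.elim (fun _ => False) (fun w => cc w = cc t) x : Prop) ↔
          Sum.elim (fun _ => False) (fun w => cc w = cc t) y) := by
      intro x y hxy
      rw [sdiff_adj] at hxy
      obtain ⟨hxy', hne⟩ := hxy
      have hne' : s(x, y) ≠ s(inl a, inr t) :=
        fun hm => hne ((fromEdgeSet_adj _).mpr ⟨hm, hxy'.ne⟩)
      have key : ∀ (j : J) (w : ↥(Sᶜ)), G''.Adj (inl j) (inr w) →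
          s(inl j, inr w) ≠ s(inl a, inr t) → ¬ cc w = cc t := by
        intro j w hjw hneq hC
        obtain ⟨hws, hj⟩ := (hlr j w).mp hjw
        have hwt : w = t := attach_unique w t hC hws hts
        apply hneq
        rw [hwt] at hj ⊢
        rw [hj, ← ha]
      match x, y with
      | inl p, inl q => exact Iff.rfl
      | inl p, inr w =>
        simp only [Sum.elim_inl, Sum.elim_inr, false_iff]
        exact key p w hxy' hne'
      | inr w, inl p =>
        simp only [Sum.elim_inl, Sum.elim_inr, iff_false]
        refine key p w hxy'.symm ?_
        rw [Sym2.eq_swap]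
        exact hne'
      | inr w, inr w' =>
        have hA : td.T.Adj w.1 w'.1 := (hrr w w').mp hxy'
        have hC : cc w = cc w' :=
          ConnectedComponent.sound (SimpleGraph.Adj.reachable
            (show (td.T.induce Sᶜ).Adj w w' from hA))
        simp only [Sum.elim_inr]
        rw [hC]
    exact no_reach_of_cut _ _ hcut (a := Sum.inr t) (b := Sum.inl a)
      rfl (fun h => h) hr.symm
  have hacyc : G''.IsAcyclic := by
    rw [isAcyclic_iff_forall_adj_isBridge]
    intro x y hadj
    rw [isBridge_iff]
    show ¬ (G'' \ fromEdgeSet {s(x, y)}).Reachable x y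
    match x, y with
    | inl a, inl b => exact L1 a b ((hll a b).mp hadj)
    | inr u, inr v => exact L2 u v ((hrr u v).mp hadj)
    | inl a, inr t => exact L3 a t hadj
    | inr t, inl a =>
      rw [Sym2.eq_swap]
      intro hr
      exact L3 a t hadj.symm hr.symm
  refine ⟨⟨hconn, hacyc⟩, fun k => ?_⟩
  match k with
  | inl j => exact hW' j
  | inr t => exact hW t.1
end

section
/- Let G be a graph on a finite vertex set V with a linear elimination order, and suppose H ⊇ G is a supergraph of G on V closed under fill-in: whenever {u,v} and {u,w} are edges of H with u preceding both v and w in the order, then {v,w} is an edge of H. If every vertex of V has at most W neighbors in H that come later in the order, then the treewidth of G is at most W. -/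
/-- Samer–Veith elimination-ordering correctness: if `H` is a supergraph of `G`
on a linearly ordered finite vertex set that is closed under fill-in (whenever
`u` is adjacent to two later vertices `v` and `w`, then `v` and `w` are
adjacent), and every vertex has at most `W` later neighbors in `H`, then `G` has
treewidth at most `W`, i.e. it admits a tree decomposition all of whose bags
have size at most `W + 1`. -/
theorem stmt_16 {V : Type} [Fintype V] [LinearOrder V]
    (G H : SimpleGraph V) (W : ℕ)
    (hsub : G ≤ H)
    (hfill : ∀ u v w : V, H.Adj u v → H.Adj u w → u < v → u < w → v ≠ w →
      H.Adj v w)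
    (hdeg : ∀ v : V, {w : V | H.Adj v w ∧ v < w}.ncard ≤ W) :
    ∃ (K : Type) (td : TreeDecomp V K G), ∀ k : K, (td.bag k).ncard ≤ W + 1 := by
  classical
  obtain hV | hV := isEmpty_or_nonempty V
  · refine ⟨PUnit, ⟨⊥, ⟨SimpleGraph.Connected.mk (fun a b => by cases Subsingleton.elim a b; exact SimpleGraph.Reachable.refl a), SimpleGraph.isAcyclic_bot⟩, fun _ => ∅, fun u v h => isEmptyElim u, fun v => isEmptyElim v⟩, fun k => by simp⟩
  -- nonempty case
  set m : V := Finset.univ.max' Finset.univ_nonempty with hm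
  have hle_m : ∀ v : V, v ≤ m := fun v => Finset.le_max' _ v (Finset.mem_univ v)
  set N : V → Finset V := fun v => Finset.univ.filter fun w => H.Adj v w ∧ v < w with hN
  have hmemN : ∀ v w : V, w ∈ N v ↔ H.Adj v w ∧ v < w := by
    intro v w; simp [hN]
  set p : V → V := fun v => if hv : (N v).Nonempty then (N v).min' hv else m with hp
  have hple : ∀ v : V, v ≤ p v := by
    intro v
    by_cases hv : (N v).Nonempty
    · have := (N v).min'_mem hv
      rw [hmemN] at this
      simp only [hp, dif_pos hv]
      exact this.2.le
    · simp only [hp, dif_neg hv]; exact hle_m v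
  have hpm : p m = m := by
    have : ¬ (N m).Nonempty := by
      rintro ⟨w, hw⟩
      rw [hmemN] at hw
      exact absurd (hle_m w) (not_le.2 hw.2)
    simp [hp, this]
  have hlt : ∀ v : V, v ≠ m → v < p v := by
    intro v hv
    by_cases h : (N v).Nonempty
    · have := (N v).min'_mem h
      rw [hmemN] at this
      simpa only [hp, dif_pos h] using this.2
    · simp only [hp, dif_neg h]
      exact lt_of_le_of_ne (hle_m v) hv
  have hpadjH : ∀ v : V, (N v).Nonempty → H.Adj v (p v) ∧ v < p v := by
    intro v hv
    have := (N v).min'_mem hv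
    rw [hmemN] at this
    simpa only [hp, dif_pos hv] using this
  have hpmin : ∀ v w : V, w ∈ N v → p v ≤ w := by
    intro v w hw
    have hv : (N v).Nonempty := ⟨w, hw⟩
    simp only [hp, dif_pos hv]
    exact Finset.min'_le _ _ hw
  -- the tree
  set T : SimpleGraph V :=
    { Adj := fun a b => a ≠ b ∧ (p a = b ∨ p b = a)
      symm := ⟨by rintro a b ⟨hab, h | h⟩ <;> exact ⟨hab.symm, by tauto⟩⟩
      loopless := ⟨by rintro a ⟨hab, -⟩; exact hab rfl⟩ } with hT
  have hTadj : ∀ a b : V, T.Adj a b ↔ a ≠ b ∧ (p a = b ∨ p b = a) := fun a b => Iff.rfl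
  have hwf : WellFounded ((· > ·) : V → V → Prop) := (Finite.to_wellFoundedGT).wf
  have hiter : ∀ (k : ℕ) (w : V), w ≤ p^[k] w := by
    intro k
    induction k with
    | zero => intro w; simp
    | succ n ih =>
      intro w
      rw [Function.iterate_succ_apply]
      exact (hple w).trans (ih (p w))
  -- connectivity
  have hreach : ∀ v : V, T.Reachable v m := by
    intro v
    induction v using hwf.induction with
    | _ v ih =>
      rcases eq_or_ne v m with rfl | hvm
      · exact SimpleGraph.Reachable.refl m
      · have hadj : T.Adj v (p v) := ⟨(hlt v hvm).ne, Or.inl rfl⟩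
        exact hadj.reachable.trans (ih (p v) (hlt v hvm))
  have hconn : T.Connected := SimpleGraph.Connected.mk (fun a b => (hreach a).trans (hreach b).symm)
  -- acyclicity
  have hbridge : ∀ a : V, a < p a → T.IsBridge s(a, p a) := by
    intro a ha
    rw [SimpleGraph.isBridge_iff]
    rintro ⟨w⟩
    set Desc : Set V := {x | ∃ k : ℕ, p^[k] x = a} with hD
    have haD : a ∈ Desc := ⟨0, rfl⟩
    have hpaD : p a ∉ Desc := by
      rintro ⟨k, hk⟩
      have := hiter k (p a)
      rw [hk] at this
      exact absurd this (not_le.2 ha)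
    have hclosed : ∀ x y : V, x ∈ Desc → (T \ SimpleGraph.fromEdgeSet {s(a, p a)}).Adj x y → y ∈ Desc := by
      rintro x y ⟨k, hk⟩ hxy
      rw [SimpleGraph.sdiff_adj] at hxy
      obtain ⟨⟨hne, hcase⟩, hnot⟩ := hxy
      have hkey : s(x, y) ≠ s(a, p a) := by
        intro he
        exact hnot (by rw [SimpleGraph.fromEdgeSet_adj]; exact ⟨by rw [he]; rfl, hne⟩)
      rcases hcase with hpx | hpy
      · -- p x = y
        have hxa : x ≠ a := by
          rintro rfl
          exact hkey (by rw [hpx])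
        obtain ⟨k', rfl⟩ : ∃ k', k = k' + 1 := by
          cases k with
          | zero => exact absurd hk hxa
          | succ n => exact ⟨n, rfl⟩
        rw [Function.iterate_succ_apply, hpx] at hk
        exact ⟨k', hk⟩
      · exact ⟨k + 1, by rw [Function.iterate_succ_apply, hpy, hk]⟩
    have hwalk : ∀ {x y : V}, (T \ SimpleGraph.fromEdgeSet {s(a, p a)}).Walk x y → x ∈ Desc → y ∈ Desc := by
      intro x y w
      induction w with
      | nil => exact id
      | cons h q ih => exact fun hx => ih (hclosed _ _ hx h)
    exact hpaD (hwalk w haD)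
  have hacyclic : T.IsAcyclic := by
    rw [SimpleGraph.isAcyclic_iff_forall_edge_isBridge]
    intro e he
    induction e with
    | _ a b =>
      rw [SimpleGraph.mem_edgeSet, hTadj] at he
      obtain ⟨hne, hab | hba⟩ := he
      · have : a < p a := lt_of_le_of_ne (hple a) (by rw [hab]; exact hne)
        rw [← hab]
        exact hbridge a this
      · have : b < p b := lt_of_le_of_ne (hple b) (by rw [hba]; exact fun h => hne h.symm)
        rw [Sym2.eq_swap, ← hba]
        exact hbridge b this
  -- bags
  set bag : V → Set V := fun t => insert t (↑(N t) : Set V) with hbag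
  have hmembag : ∀ v t : V, v ∈ bag t ↔ v = t ∨ (H.Adj t v ∧ t < v) := by
    intro v t
    simp [hbag, hmemN]
  -- conn
  have hconnv : ∀ v : V, (T.induce {t : V | v ∈ bag t}).Connected := by
    intro v
    set S : Set V := {t : V | v ∈ bag t} with hS
    have hvS : v ∈ S := by rw [hS, Set.mem_setOf_eq, hmembag]; exact Or.inl rfl
    have key : ∀ t : V, ∀ ht : t ∈ S, (T.induce S).Reachable ⟨t, ht⟩ ⟨v, hvS⟩ := by
      intro t
      induction t using hwf.induction with
      | _ t ih =>
        intro ht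
        rcases eq_or_ne t v with rfl | htv
        · exact SimpleGraph.Reachable.refl _
        · have ht' : H.Adj t v ∧ t < v := by
            have := ht
            rw [hS, Set.mem_setOf_eq, hmembag] at this
            rcases this with h | h
            · exact absurd h.symm htv
            · exact h
          have hvN : v ∈ N t := by rw [hmemN]; exact ht'
          have hNne : (N t).Nonempty := ⟨v, hvN⟩
          have hptv : p t ≤ v := hpmin t v hvN
          have hptS : p t ∈ S := by
            rw [hS, Set.mem_setOf_eq, hmembag]
            rcases eq_or_ne (p t) v with h | h
            · exact Or.inl h.symm
            · obtain ⟨hadj, hlt'⟩ := hpadjH t hNne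
              refine Or.inr ⟨hfill t (p t) v hadj ht'.1 hlt' ht'.2 h, lt_of_le_of_ne hptv h⟩
          have hedgeT : T.Adj t (p t) := ⟨(hpadjH t hNne).2.ne, Or.inl rfl⟩
          have hedge : (T.induce S).Adj ⟨t, ht⟩ ⟨p t, hptS⟩ := hedgeT
          exact hedge.reachable.trans (ih (p t) (hpadjH t hNne).2 hptS)
    haveI : Nonempty ↥S := ⟨⟨v, hvS⟩⟩
    refine SimpleGraph.Connected.mk fun a b => ?_
    obtain ⟨ta, hta⟩ := a
    obtain ⟨tb, htb⟩ := b
    exact (key ta hta).trans (key tb htb).symm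
  refine ⟨V, ⟨T, ⟨hconn, hacyclic⟩, bag, ?_, hconnv⟩, ?_⟩
  · intro u v huv
    have hH : H.Adj u v := hsub huv
    rcases lt_or_gt_of_ne huv.ne with h | h
    · exact ⟨u, (hmembag u u).mpr (Or.inl rfl), (hmembag v u).mpr (Or.inr ⟨hH, h⟩)⟩
    · exact ⟨v, (hmembag u v).mpr (Or.inr ⟨hH.symm, h⟩), (hmembag v v).mpr (Or.inl rfl)⟩
  · intro k
    have h1 : (bag k).ncard ≤ (↑(N k) : Set V).ncard + 1 := Set.ncard_insert_le _ _
    have h2 : (↑(N k) : Set V) = {w : V | H.Adj k w ∧ k < w} := by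
      ext w; simp [hmemN]
    rw [h2] at h1
    exact h1.trans (Nat.add_le_add_right (hdeg k) 1)
end
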